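/- Let K ≥ 2, N ≥ 1, x : {1,…,N} → {1,…,K}, and θ ∈ Δ. Let μ denote the (K−1)-dimensional Hausdorff measure on the affine hyperplane {z ∈ ℝ^K : Σ_ℓ z_ℓ = 1}, and μ^{⊗N} the corresponding product measure on Δ^N. Then μ^{⊗N}({u ∈ Δ^N : θ ∈ F(u)}) = (Π_{k=1}^K θ_k^{N_k}) · μ(Δ)^N, where N_k = |{n : x_n = k}|. Equivalently, under the uniform probability measure on Δ^N, the probability that θ ∈ F(u) equals the multinomial likelihood Π_k θ_k^{N_k}. -/

import Mathlib

open MeasureTheory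

noncomputable section

/-- The probability simplex inside `EuclideanSpace ℝ (Fin K)`. -/
def esimplex (K : ℕ) : Set (EuclideanSpace ℝ (Fin K)) :=
  {z | (∀ i, 0 ≤ z i) ∧ ∑ i, z i = 1}

/-- The `ℓ`-th vertex of the probability simplex (standard basis vector). -/
def evtx (K : ℕ) (ℓ : Fin K) : EuclideanSpace ℝ (Fin K) :=
  (EuclideanSpace.equiv (Fin K) ℝ).symm (fun i => if i = ℓ then 1 else 0)

/-- The subsimplex `Δ_k(θ)`: convex hull of `{θ} ∪ {V_ℓ : ℓ ≠ k}`. -/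
def esubsimplex (K : ℕ) (k : Fin K) (θ : EuclideanSpace ℝ (Fin K)) :
    Set (EuclideanSpace ℝ (Fin K)) :=
  convexHull ℝ (insert θ {z | ∃ ℓ : Fin K, ℓ ≠ k ∧ z = evtx K ℓ})

open Set Pointwise

lemma evtx_apply (K : ℕ) (ℓ i : Fin K) : evtx K ℓ i = if i = ℓ then 1 else 0 := rfl

lemma esimplex_eq_convexHull (K : ℕ) :
    esimplex K = convexHull ℝ (Set.range (evtx K)) := by
  have h0 : esimplex K = (EuclideanSpace.equiv (Fin K) ℝ).symm.toLinearEquiv.toLinearMap ''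
      stdSimplex ℝ (Fin K) := by
    ext z; constructor
    · intro hz; exact ⟨z.ofLp, hz, rfl⟩
    · rintro ⟨y, hy, rfl⟩; exact hy
  rw [h0, ← convexHull_basis_eq_stdSimplex, LinearMap.image_convexHull]
  congr 1
  ext z
  constructor
  · rintro ⟨_, ⟨ℓ, rfl⟩, rfl⟩; exact ⟨ℓ, by ext j; simp [evtx_apply, eq_comm]⟩
  · rintro ⟨ℓ, rfl⟩; exact ⟨_, ⟨ℓ, rfl⟩, by ext j; simp [evtx_apply, eq_comm]⟩

lemma convex_esimplex (K : ℕ) : Convex ℝ (esimplex K) := by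
  rw [esimplex_eq_convexHull]; exact convex_convexHull ℝ _

lemma evtx_mem (K : ℕ) (ℓ : Fin K) : evtx K ℓ ∈ esimplex K := by
  constructor
  · intro i; rw [evtx_apply]; split <;> norm_num
  · simp [evtx_apply]

lemma esubsimplex_subset (K : ℕ) (k : Fin K) (θ : EuclideanSpace ℝ (Fin K))
    (hθ : θ ∈ esimplex K) : esubsimplex K k θ ⊆ esimplex K := by
  apply convexHull_min _ (convex_esimplex K)
  rintro z (rfl | ⟨ℓ, -, rfl⟩)
  · exact hθ
  · exact evtx_mem K ℓ

section Tmap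
variable (K : ℕ) (k : Fin K) (θ : EuclideanSpace ℝ (Fin K))

/-- The linear map sending `e_k ↦ θ` and `e_ℓ ↦ e_ℓ` for `ℓ ≠ k`. -/
def Tmap : EuclideanSpace ℝ (Fin K) →ₗ[ℝ] EuclideanSpace ℝ (Fin K) :=
  LinearMap.id + ((EuclideanSpace.proj k).toLinearMap).smulRight (θ - evtx K k)

lemma Tmap_apply (z : EuclideanSpace ℝ (Fin K)) :
    Tmap K k θ z = z + z k • (θ - evtx K k) := rfl

lemma Tmap_vtx (ℓ : Fin K) :
    Tmap K k θ (evtx K ℓ) = if ℓ = k then θ else evtx K ℓ := by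
  rw [Tmap_apply, evtx_apply]
  by_cases h : ℓ = k
  · subst h; simp
  · rw [if_neg (fun hh : k = ℓ => h hh.symm), if_neg h]; simp

lemma sum_Tmap (hθ : ∑ i, θ i = 1) (z : EuclideanSpace ℝ (Fin K)) :
    ∑ i, Tmap K k θ z i = ∑ i, z i := by
  have : ∀ i, Tmap K k θ z i = z i + z k * (θ i - evtx K k i) := fun i => rfl
  simp only [this, Finset.sum_add_distrib, ← Finset.mul_sum, Finset.sum_sub_distrib]
  have h2 : ∑ i, evtx K k i = 1 := by simp [evtx_apply]
  rw [hθ, h2]; ring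

lemma Tmap_image_simplex (hθ : θ ∈ esimplex K) :
    Tmap K k θ '' esimplex K = esubsimplex K k θ := by
  rw [esimplex_eq_convexHull, (Tmap K k θ).image_convexHull, esubsimplex]
  congr 1
  ext z
  constructor
  · rintro ⟨-, ⟨ℓ, rfl⟩, rfl⟩
    rw [Tmap_vtx]
    by_cases h : ℓ = k
    · rw [if_pos h]; exact Set.mem_insert _ _
    · rw [if_neg h]; exact Set.mem_insert_of_mem _ ⟨ℓ, h, rfl⟩
  · rintro (rfl | ⟨ℓ, hℓ, rfl⟩)
    · exact ⟨evtx K k, Set.mem_range_self k, by rw [Tmap_vtx, if_pos rfl]⟩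
    · exact ⟨evtx K ℓ, Set.mem_range_self ℓ, by rw [Tmap_vtx, if_neg hℓ]⟩
end Tmap

section H0
variable (K : ℕ)

/-- The coordinate-sum functional. -/
def sumL : EuclideanSpace ℝ (Fin K) →ₗ[ℝ] ℝ :=
  ∑ i, (EuclideanSpace.proj i).toLinearMap

lemma sumL_apply (z : EuclideanSpace ℝ (Fin K)) : sumL K z = ∑ i, z i := by
  simp [sumL]

/-- The hyperplane of zero-sum vectors. -/
def H0 : Submodule ℝ (EuclideanSpace ℝ (Fin K)) := LinearMap.ker (sumL K)

lemma mem_H0 (z : EuclideanSpace ℝ (Fin K)) : z ∈ H0 K ↔ ∑ i, z i = 0 := by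
  rw [H0, LinearMap.mem_ker, sumL_apply]

lemma sumL_surjective (hK : 1 ≤ K) : Function.Surjective (sumL K) := by
  intro c
  refine ⟨c • evtx K ⟨0, by omega⟩, ?_⟩
  rw [_root_.map_smul, sumL_apply]
  simp [evtx_apply, smul_eq_mul]

lemma finrank_H0 (hK : 1 ≤ K) : Module.finrank ℝ (H0 K) = K - 1 := by
  have h := LinearMap.finrank_range_add_finrank_ker (sumL K)
  rw [LinearMap.range_eq_top.2 (sumL_surjective K hK)] at h
  simp only [finrank_top, Module.finrank_self] at h
  have hE : Module.finrank ℝ (EuclideanSpace ℝ (Fin K)) = K := by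
    simp [finrank_euclideanSpace]
  rw [hE] at h
  rw [H0]; omega
end H0

section Det
variable (K : ℕ) (k : Fin K) (θ : EuclideanSpace ℝ (Fin K))

lemma bvec_mem (ℓ : Fin K) : evtx K ℓ - evtx K k ∈ H0 K := by
  rw [mem_H0]
  have : ∀ i, (evtx K ℓ - evtx K k) i = evtx K ℓ i - evtx K k i := fun i => rfl
  simp [this, evtx_apply, Finset.sum_sub_distrib]

/-- basis vectors of the zero-sum hyperplane -/
def bvec (ℓ : {m : Fin K // m ≠ k}) : H0 K := ⟨evtx K ℓ.1 - evtx K k, bvec_mem K k ℓ.1⟩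

lemma bvec_li : LinearIndependent ℝ (bvec K k) := by
  have h := (H0 K).injective_subtype
  apply LinearIndependent.of_comp (H0 K).subtype
  rw [Fintype.linearIndependent_iff]
  intro g hg ℓ₀
  have := congrArg (fun v : EuclideanSpace ℝ (Fin K) => v ℓ₀.1) hg
  simp only at this
  have hsum : ∀ (f : {m : Fin K // m ≠ k} → EuclideanSpace ℝ (Fin K)) (i : Fin K),
      (∑ m, f m) i = ∑ m, f m i := fun f i => by
    rw [WithLp.ofLp_sum]; exact Finset.sum_apply i Finset.univ _
  rw [hsum] at this
  have hzero : (0 : EuclideanSpace ℝ (Fin K)) ℓ₀.1 = 0 := rfl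
  rw [hzero] at this
  have heval : ∀ m : {m : Fin K // m ≠ k},
      (g m • ((H0 K).subtype ∘ bvec K k) m) ℓ₀.1
        = g m * (if ℓ₀.1 = m.1 then 1 else 0) := by
    intro m
    have : (g m • ((H0 K).subtype ∘ bvec K k) m) ℓ₀.1
        = g m * ((evtx K m.1 - evtx K k) ℓ₀.1) := rfl
    rw [this]
    have h2 : (evtx K m.1 - evtx K k) ℓ₀.1 = evtx K m.1 ℓ₀.1 - evtx K k ℓ₀.1 := rfl
    rw [h2, evtx_apply, evtx_apply, if_neg ℓ₀.2]
    ring_nf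
  rw [Finset.sum_congr rfl (fun m _ => heval m)] at this
  have hif : ∀ m : {m : Fin K // m ≠ k},
      g m * (if ℓ₀.1 = m.1 then (1:ℝ) else 0) = g m * (if ℓ₀ = m then 1 else 0) := by
    intro m; congr 1; simp [Subtype.ext_iff]
  rw [Finset.sum_congr rfl (fun m _ => hif m)] at this
  simpa using this

lemma card_ne (hK : 1 ≤ K) : Fintype.card {m : Fin K // m ≠ k} = K - 1 := by
  simp [Fintype.card_subtype_compl]

/-- A basis of the zero-sum hyperplane. -/
def bH (hK : 2 ≤ K) : Module.Basis {m : Fin K // m ≠ k} ℝ (H0 K) :=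
  haveI : Nonempty {m : Fin K // m ≠ k} :=
    Fintype.card_pos_iff.mp (by rw [card_ne K k (by omega)]; omega)
  basisOfLinearIndependentOfCardEqFinrank (bvec_li K k)
    (by rw [card_ne K k (by omega), finrank_H0 K (by omega)])

lemma bH_apply (hK : 2 ≤ K) (ℓ : {m : Fin K // m ≠ k}) :
    bH K k hK ℓ = bvec K k ℓ := by
  haveI : Nonempty {m : Fin K // m ≠ k} :=
    Fintype.card_pos_iff.mp (by rw [card_ne K k (by omega)]; omega)
  rw [bH]
  exact congrFun (coe_basisOfLinearIndependentOfCardEqFinrank _ _) ℓ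
end Det

section DetVal
variable (K : ℕ) (k : Fin K) (θ : EuclideanSpace ℝ (Fin K))

lemma sum_subtype_theta :
    ∑ m : {m : Fin K // m ≠ k}, θ m.1 = (∑ i, θ i) - θ k := by
  rw [← Finset.sum_subtype (Finset.univ.erase k)
    (fun m => by simp [Finset.mem_erase]) (fun m => θ m)]
  have := Finset.sum_erase_add Finset.univ (fun m => θ m) (Finset.mem_univ k)
  linarith

lemma sum_ite_theta (i : Fin K) :
    ∑ m : {m : Fin K // m ≠ k}, θ m.1 * (if i = m.1 then (1:ℝ) else 0)
      = if i = k then 0 else θ i := by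
  rw [← Finset.sum_subtype (Finset.univ.erase k)
    (fun m => by simp [Finset.mem_erase]) (fun m => θ m * (if i = m then (1:ℝ) else 0))]
  by_cases h : i = k
  · subst h
    rw [if_pos rfl]
    apply Finset.sum_eq_zero
    intro m hm
    rw [if_neg (fun hh => (Finset.ne_of_mem_erase hm) hh.symm), mul_zero]
  · rw [if_neg h]
    have : ∀ m ∈ Finset.univ.erase k,
        θ m * (if i = m then (1:ℝ) else 0) = if i = m then θ m else 0 := by
      intro m _; split <;> ring
    rw [Finset.sum_congr rfl this, Finset.sum_ite_eq (Finset.univ.erase k) i (fun m => θ m),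
      if_pos (Finset.mem_erase.2 ⟨h, Finset.mem_univ i⟩)]

lemma theta_sub (hθ1 : ∑ i, θ i = 1) :
    θ - evtx K k = ∑ m : {m : Fin K // m ≠ k}, θ m.1 • (evtx K m.1 - evtx K k) := by
  ext i
  have hLHS : (θ - evtx K k) i = θ i - evtx K k i := rfl
  have hsum : (∑ m : {m : Fin K // m ≠ k}, θ m.1 • (evtx K m.1 - evtx K k)) i
      = ∑ m : {m : Fin K // m ≠ k}, θ m.1 * ((if i = m.1 then (1:ℝ) else 0)
          - (if i = k then 1 else 0)) := by
    rw [WithLp.ofLp_sum, Finset.sum_apply i Finset.univ _]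
    rfl
  rw [hLHS, hsum, evtx_apply]
  simp only [mul_sub, Finset.sum_sub_distrib, ← Finset.sum_mul]
  rw [sum_ite_theta, sum_subtype_theta, hθ1]
  by_cases h : i = k
  · subst h; simp
  · simp [h]
end DetVal

section Lmap
variable (K : ℕ) (k : Fin K) (θ : EuclideanSpace ℝ (Fin K))

lemma Tmap_mem_H0 (hθ1 : ∑ i, θ i = 1) :
    ∀ z ∈ H0 K, Tmap K k θ z ∈ H0 K := by
  intro z hz
  rw [mem_H0] at hz ⊢
  rw [sum_Tmap K k θ hθ1, hz]

/-- `Tmap` restricted to the zero-sum hyperplane. -/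
def Lmap (hθ1 : ∑ i, θ i = 1) : H0 K →ₗ[ℝ] H0 K :=
  (Tmap K k θ).restrict (Tmap_mem_H0 K k θ hθ1)

lemma Lmap_basis (hK : 2 ≤ K) (hθ1 : ∑ i, θ i = 1) (ℓ : {m : Fin K // m ≠ k}) :
    Lmap K k θ hθ1 (bH K k hK ℓ)
      = bH K k hK ℓ - ∑ m : {m : Fin K // m ≠ k}, θ m.1 • bH K k hK m := by
  apply Subtype.ext
  rw [Lmap, LinearMap.restrict_coe_apply]
  have hcoe2 : ((bH K k hK ℓ - ∑ m : {m : Fin K // m ≠ k}, θ m.1 • bH K k hK m : H0 K)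
      : EuclideanSpace ℝ (Fin K))
      = (evtx K ℓ.1 - evtx K k)
        - ∑ m : {m : Fin K // m ≠ k}, θ m.1 • (evtx K m.1 - evtx K k) := by
    push_cast [bH_apply, bvec]
    rfl
  rw [hcoe2, bH_apply, ]
  have hcoe1 : ((bvec K k ℓ : H0 K) : EuclideanSpace ℝ (Fin K)) = evtx K ℓ.1 - evtx K k := rfl
  rw [hcoe1, Tmap_apply]
  have hk : (evtx K ℓ.1 - evtx K k) k = -1 := by
    have : (evtx K ℓ.1 - evtx K k) k = evtx K ℓ.1 k - evtx K k k := rfl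
    rw [this, evtx_apply, evtx_apply, if_pos rfl, if_neg (fun h => ℓ.2 h.symm)]
    norm_num
  rw [hk, ← theta_sub K k θ hθ1]
  module

lemma det_Lmap (hK : 2 ≤ K) (hθ1 : ∑ i, θ i = 1) :
    LinearMap.det (Lmap K k θ hθ1) = θ k := by
  rw [← LinearMap.det_toMatrix (bH K k hK)]
  have hM : LinearMap.toMatrix (bH K k hK) (bH K k hK) (Lmap K k θ hθ1)
      = 1 + Matrix.replicateCol Unit (fun m : {m : Fin K // m ≠ k} => -θ m.1)
          * Matrix.replicateRow Unit (fun _ : {m : Fin K // m ≠ k} => (1:ℝ)) := by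
    ext m ℓ
    rw [LinearMap.toMatrix_apply, Lmap_basis K k θ hK hθ1, map_sub, Module.Basis.repr_self]
    rw [← Matrix.vecMulVec_eq Unit]
    rw [Matrix.add_apply, Matrix.one_apply, Matrix.vecMulVec_apply,
      Finsupp.sub_apply, Finsupp.single_apply,
      congrFun (Module.Basis.repr_sum_self (bH K k hK) (fun m => θ m.1)) m]
    by_cases h : ℓ = m
    · subst h; simp; ring
    · rw [if_neg h, if_neg (fun hh => h hh.symm)]; ring
  rw [hM, Matrix.det_one_add_replicateCol_mul_replicateRow]
  rw [dotProduct]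
  simp only [one_mul]
  rw [Finset.sum_neg_distrib]
  rw [sum_subtype_theta, hθ1]
  ring
end Lmap

section Param
variable (K : ℕ) (k : Fin K)

/-- Coordinates on the affine hyperplane of sum-one vectors, based at `evtx K k`. -/
def imap (w : EuclideanSpace ℝ (Fin (Module.finrank ℝ (H0 K)))) :
    EuclideanSpace ℝ (Fin K) :=
  evtx K k + (((stdOrthonormalBasis ℝ (H0 K)).repr.symm w : H0 K) : EuclideanSpace ℝ (Fin K))

lemma isometry_imap : Isometry (imap K k) := by
  apply Isometry.of_dist_eq
  intro w w'
  rw [imap, imap, dist_add_left]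
  rw [← Subtype.dist_eq]
  exact (stdOrthonormalBasis ℝ (H0 K)).repr.symm.dist_map w w'

lemma sum_imap (w : EuclideanSpace ℝ (Fin (Module.finrank ℝ (H0 K)))) :
    ∑ i, imap K k w i = 1 := by
  have h1 : ∀ i, imap K k w i = evtx K k i
      + (((stdOrthonormalBasis ℝ (H0 K)).repr.symm w : H0 K) : EuclideanSpace ℝ (Fin K)) i :=
    fun i => rfl
  have h2 : (((stdOrthonormalBasis ℝ (H0 K)).repr.symm w : H0 K)
      : EuclideanSpace ℝ (Fin K)) ∈ H0 K := Submodule.coe_mem _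
  rw [mem_H0] at h2
  simp only [h1, Finset.sum_add_distrib, h2, add_zero]
  simp [evtx_apply]

lemma range_imap : Set.range (imap K k) = {z : EuclideanSpace ℝ (Fin K) | ∑ i, z i = 1} := by
  apply Set.Subset.antisymm
  · rintro _ ⟨w, rfl⟩; exact sum_imap K k w
  · rintro z hz
    have hmem : z - evtx K k ∈ H0 K := by
      rw [mem_H0]
      have : ∀ i, (z - evtx K k) i = z i - evtx K k i := fun i => rfl
      simp only [this, Finset.sum_sub_distrib]
      rw [hz]
      simp [evtx_apply]
    refine ⟨(stdOrthonormalBasis ℝ (H0 K)).repr ⟨z - evtx K k, hmem⟩, ?_⟩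
    rw [imap, LinearIsometryEquiv.symm_apply_apply]
    simp

lemma hausdorff_imap_image (d : ℝ) (hd : 0 ≤ d)
    (s : Set (EuclideanSpace ℝ (Fin (Module.finrank ℝ (H0 K))))) :
    μH[d] (imap K k '' s) = μH[d] s :=
  (isometry_imap K k).hausdorffMeasure_image (Or.inl hd) s
end Param

section KeyMeasure
variable (K : ℕ) (k : Fin K) (θ : EuclideanSpace ℝ (Fin K))

/-- The Euclidean model space for the hyperplane. -/
abbrev Fsp (K : ℕ) := EuclideanSpace ℝ (Fin (Module.finrank ℝ (H0 K)))

lemma esimplex_eq_image :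
    esimplex K = imap K k '' (imap K k ⁻¹' esimplex K) := by
  rw [Set.image_preimage_eq_inter_range, range_imap]
  exact (Set.inter_eq_left.2 fun z hz => hz.2).symm

lemma measure_esubsimplex (hK : 2 ≤ K) (hθ : θ ∈ esimplex K) :
    μH[(K:ℝ)-1] (esubsimplex K k θ)
      = ENNReal.ofReal (θ k) * μH[(K:ℝ)-1] (esimplex K) := by
  obtain ⟨hθ0, hθ1⟩ := hθ
  have hd : (0:ℝ) ≤ (K:ℝ)-1 := by
    have : (1:ℝ) ≤ (K:ℝ) := by exact_mod_cast (by omega : 1 ≤ K)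
    linarith
  set A : Set (Fsp K) := imap K k ⁻¹' esimplex K with hA
  set φ := (stdOrthonormalBasis ℝ (H0 K)).repr with hφ
  set G : Fsp K →ₗ[ℝ] Fsp K :=
    (φ.toLinearEquiv : H0 K →ₗ[ℝ] Fsp K) ∘ₗ (Lmap K k θ hθ1)
      ∘ₗ (φ.toLinearEquiv.symm : Fsp K →ₗ[ℝ] H0 K) with hG
  have hmemc : θ - evtx K k ∈ H0 K := by
    rw [mem_H0]
    have : ∀ i, (θ - evtx K k) i = θ i - evtx K k i := fun i => rfl
    simp only [this, Finset.sum_sub_distrib, hθ1]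
    simp [evtx_apply]
  set c : Fsp K := φ ⟨θ - evtx K k, hmemc⟩ with hc
  set g : Fsp K → Fsp K := fun w => c + G w with hg
  have himu : ∀ w : Fsp K, imap K k (g w) = Tmap K k θ (imap K k w) := by
    intro w
    rw [hg]
    show imap K k (c + G w) = _
    rw [imap]
    have hGw : ((φ.symm (c + G w) : H0 K) : EuclideanSpace ℝ (Fin K))
        = (θ - evtx K k) + Tmap K k θ ((φ.symm w : H0 K) : EuclideanSpace ℝ (Fin K)) := by
      rw [map_add]
      have h1 : φ.symm c = ⟨θ - evtx K k, hmemc⟩ := by rw [hc]; exact φ.symm_apply_apply _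
      have h2 : φ.symm (G w) = Lmap K k θ hθ1 (φ.symm w) := by
        rw [hG]
        show φ.symm ((φ.toLinearEquiv) ((Lmap K k θ hθ1) ((φ.toLinearEquiv.symm) w))) = _
        rw [show ∀ v : H0 K, φ.toLinearEquiv v = φ v from fun _ => rfl]
        rw [φ.symm_apply_apply]
        rfl
      rw [h1, h2]
      push_cast
      try rw [Lmap, LinearMap.restrict_coe_apply]
      try rfl
    rw [hGw, imap, Tmap_apply, Tmap_apply]
    have hpk : (evtx K k + ((φ.symm w : H0 K) : EuclideanSpace ℝ (Fin K))) k
        = 1 + ((φ.symm w : H0 K) : EuclideanSpace ℝ (Fin K)) k := by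
      have : (evtx K k + ((φ.symm w : H0 K) : EuclideanSpace ℝ (Fin K))) k
          = evtx K k k + ((φ.symm w : H0 K) : EuclideanSpace ℝ (Fin K)) k := rfl
      rw [this, evtx_apply, if_pos rfl]
    rw [hpk]
    module
  have e1 : esubsimplex K k θ = imap K k '' (g '' A) := by
    rw [← Tmap_image_simplex K k θ ⟨hθ0, hθ1⟩]
    conv_lhs => rw [esimplex_eq_image K k]
    rw [Set.image_image, Set.image_image]
    exact Set.image_congr fun w _ => (himu w).symm
  rw [e1, hausdorff_imap_image K k _ hd]
  have e2 : g '' A = c +ᵥ (G '' A) := by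
    rw [← Set.image_vadd, Set.image_image]
    rfl
  rw [e2, MeasureTheory.hausdorffMeasure_vadd c (Or.inl hd)]
  have hcast : ((Module.finrank ℝ (Fsp K) : ℕ) : ℝ) = (K:ℝ) - 1 := by
    rw [show Module.finrank ℝ (Fsp K) = K - 1 by
          rw [finrank_euclideanSpace, Fintype.card_fin, finrank_H0 K (by omega)],
      Nat.cast_sub (by omega : 1 ≤ K), Nat.cast_one]
  rw [← hcast, MeasureTheory.Measure.addHaar_image_linearMap]
  have hdet : LinearMap.det G = θ k := by
    rw [hG, LinearMap.det_conj, det_Lmap K k θ hK hθ1]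
  rw [hdet, abs_of_nonneg (hθ0 k), hcast]
  congr 1
  rw [← hausdorff_imap_image K k _ hd, ← esimplex_eq_image K k]
end KeyMeasure

section Final
variable (K : ℕ)

lemma isCompact_esimplex : IsCompact (esimplex K) := by
  rw [esimplex_eq_convexHull]; exact (Set.finite_range _).isCompact_convexHull ℝ

lemma measurableSet_esimplex : MeasurableSet (esimplex K) :=
  (isCompact_esimplex K).isClosed.measurableSet

lemma measure_esimplex_lt_top (hK : 2 ≤ K) : μH[(K:ℝ)-1] (esimplex K) < ⊤ := by
  set k : Fin K := ⟨0, by omega⟩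
  have hd : (0:ℝ) ≤ (K:ℝ)-1 := by
    have : (1:ℝ) ≤ (K:ℝ) := by exact_mod_cast (by omega : 1 ≤ K)
    linarith
  rw [esimplex_eq_image K k, hausdorff_imap_image K k _ hd]
  have hcpt : IsCompact (imap K k ⁻¹' esimplex K) := by
    have hclosed : IsClosed (imap K k ⁻¹' esimplex K) :=
      (isCompact_esimplex K).isClosed.preimage (isometry_imap K k).continuous
    have hbdd : Bornology.IsBounded (imap K k ⁻¹' esimplex K) :=
      (isometry_imap K k).antilipschitz.isBounded_preimage
        (isCompact_esimplex K).isBounded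
    exact Metric.isCompact_of_isClosed_isBounded hclosed hbdd
  have hcast : ((Module.finrank ℝ (Fsp K) : ℕ) : ℝ) = (K:ℝ) - 1 := by
    rw [show Module.finrank ℝ (Fsp K) = K - 1 by
          rw [finrank_euclideanSpace, Fintype.card_fin, finrank_H0 K (by omega)],
      Nat.cast_sub (by omega : 1 ≤ K), Nat.cast_one]
  rw [← hcast]
  exact hcpt.measure_lt_top

lemma measurableSet_esubsimplex (k : Fin K) (θ : EuclideanSpace ℝ (Fin K)) :
    MeasurableSet (esubsimplex K k θ) := by
  have hfin : (insert θ {z | ∃ ℓ : Fin K, ℓ ≠ k ∧ z = evtx K ℓ}).Finite := by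
    apply Set.Finite.insert
    apply (Set.finite_range (evtx K)).subset
    rintro z ⟨ℓ, -, rfl⟩; exact ⟨ℓ, rfl⟩
  exact (hfin.isCompact_convexHull ℝ).isClosed.measurableSet
end Final

theorem stmt17 (K N : ℕ) (hK : 2 ≤ K) (hN : 1 ≤ N)
    (x : Fin N → Fin K)
    (θ : EuclideanSpace ℝ (Fin K)) (hθ : θ ∈ esimplex K) :
    Measure.pi (fun _ : Fin N => μH[(K : ℝ) - 1].restrict (esimplex K))
        {u : Fin N → EuclideanSpace ℝ (Fin K) | ∀ n, u n ∈ esubsimplex K (x n) θ} =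
      (∏ k : Fin K,
          ENNReal.ofReal (θ k) ^ (Finset.univ.filter fun n => x n = k).card) *
        μH[(K : ℝ) - 1] (esimplex K) ^ N := by
  haveI : IsFiniteMeasure (μH[(K : ℝ) - 1].restrict (esimplex K)) := by
    constructor
    rw [Measure.restrict_apply_univ]
    exact measure_esimplex_lt_top K hK
  have hset : {u : Fin N → EuclideanSpace ℝ (Fin K) | ∀ n, u n ∈ esubsimplex K (x n) θ}
      = Set.pi Set.univ (fun n => esubsimplex K (x n) θ) := by
    ext u; simp [Set.mem_pi]
  rw [hset, Measure.pi_pi]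
  have hres : ∀ n, (μH[(K : ℝ) - 1].restrict (esimplex K)) (esubsimplex K (x n) θ)
      = ENNReal.ofReal (θ (x n)) * μH[(K : ℝ) - 1] (esimplex K) := by
    intro n
    rw [Measure.restrict_apply' (measurableSet_esimplex K),
      Set.inter_eq_left.2 (esubsimplex_subset K (x n) θ hθ),
      measure_esubsimplex K (x n) θ hK hθ]
  rw [Finset.prod_congr rfl (fun n _ => hres n), Finset.prod_mul_distrib,
    Finset.prod_const, Finset.card_univ, Fintype.card_fin]
  congr 1
  rw [← Finset.prod_fiberwise_of_maps_to (fun n _ => Finset.mem_univ (x n))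
    (fun n => ENNReal.ofReal (θ (x n)))]
  refine Finset.prod_congr rfl fun k _ => ?_
  rw [Finset.prod_congr rfl (fun n hn => by
      rw [(Finset.mem_filter.1 hn).2] : ∀ n ∈ Finset.univ.filter fun n => x n = k,
        ENNReal.ofReal (θ (x n)) = ENNReal.ofReal (θ k)), Finset.prod_const]
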